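/- Let L be a real n×n matrix with L_{ij} ≤ 0 for all i ≠ j and with every row summing to zero, let M = diag(M_1,…,M_n) and D = diag(D_1,…,D_n) be diagonal matrices with all M_i > 0 and D_i > 0, and suppose the stability condition (C) holds: L_{ii} ≤ D_i²/(2·M_i) for every i. Let J = [[0, I], [−M⁻¹L, −M⁻¹D]] be the swing-equation Jacobian. Then every complex eigenvalue λ of J with λ ≠ 0 satisfies Re(λ) < 0. -/

import Mathlib

open Matrix

private lemma swing_aux_false (a b Mi Di : ℝ) (hM : 0 < Mi) (hD : 0 < Di) (ha : 0 ≤ a)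
    (hab : 0 < a^2 + b^2)
    (key : (a^2+b^2) * ((Mi*a+Di)^2 + Mi^2*b^2) * Mi ≤ Di^2 * (Mi*b^2 - Mi*a^2 - Di*a)) :
    False := by
  have e1 : Di^2 ≤ (Mi*a+Di)^2 := by nlinarith [mul_nonneg hM.le ha]
  rcases eq_or_ne b 0 with hb | hb
  · subst hb
    have ha' : 0 < a := by nlinarith
    have hMaD : 0 < Mi*a+Di := by positivity
    nlinarith [mul_pos (mul_pos (mul_pos hD hD) ha') hMaD,
      mul_nonneg (mul_nonneg (sq_nonneg a) (sq_nonneg (Mi*a+Di))) hM.le]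
  · have hb2 : 0 < b^2 := by positivity
    have h1 : Mi*b^2*Di^2 ≤ Mi*(a^2+b^2)*(Mi*a+Di)^2 := by
      nlinarith [mul_nonneg (mul_nonneg hM.le (sq_nonneg b)) (sub_nonneg.mpr e1),
        mul_nonneg (mul_nonneg hM.le (sq_nonneg a)) (sq_nonneg (Mi*a+Di))]
    have h2 : 0 < Mi^3*b^2*(a^2+b^2) := by positivity
    nlinarith [h1, h2, mul_nonneg (mul_nonneg hM.le (sq_nonneg a)) (sq_nonneg Di),
      mul_nonneg (mul_nonneg ha hD.le) (sq_nonneg Di)]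

/-- For Laplacian-type `L` and positive diagonal `M`, `D` satisfying
the stability condition (C): `L_{ii} ≤ D_i²/(2M_i)`, every nonzero complex eigenvalue of
the swing-equation Jacobian `J = [[0, I], [−M⁻¹L, −M⁻¹D]]` has negative real part. -/
theorem nonzero_eigenvalues_left_half_plane_of_condition_C
    (n : ℕ) (L : Matrix (Fin n) (Fin n) ℝ)
    (hoff : ∀ i j, i ≠ j → L i j ≤ 0)
    (hrow : ∀ i, ∑ j, L i j = 0)
    (Mv Dv : Fin n → ℝ) (hM : ∀ i, 0 < Mv i) (hD : ∀ i, 0 < Dv i)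
    (M D : Matrix (Fin n) (Fin n) ℝ)
    (hMdef : M = Matrix.diagonal Mv) (hDdef : D = Matrix.diagonal Dv)
    (hC : ∀ i, L i i ≤ (Dv i) ^ 2 / (2 * Mv i))
    (J : Matrix (Fin n ⊕ Fin n) (Fin n ⊕ Fin n) ℝ)
    (hJ : J = Matrix.fromBlocks 0 1 (-(M⁻¹ * L)) (-(M⁻¹ * D)))
    (lam : ℂ) (hlam : lam ∈ spectrum ℂ (J.map Complex.ofReal)) (hne : lam ≠ 0) :
    lam.re < 0 := by
  subst hMdef hDdef hJ
  -- extract an eigenvector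
  rw [← AlgEquiv.spectrum_eq (Matrix.toLinAlgEquiv' (R := ℂ) (n := Fin n ⊕ Fin n)),
    ← Module.End.hasEigenvalue_iff_mem_spectrum] at hlam
  obtain ⟨v, hvmem⟩ := hlam.exists_hasEigenvector
  have hv0 : v ≠ 0 := hvmem.right
  have hv : ((Matrix.fromBlocks 0 1 (-((Matrix.diagonal Mv)⁻¹ * L))
      (-((Matrix.diagonal Mv)⁻¹ * Matrix.diagonal Dv))).map Complex.ofReal) *ᵥ v = lam • v := by
    simpa [Matrix.toLinAlgEquiv'_apply, Matrix.toLin'_apply] using hvmem.apply_eq_smul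
  have hMinv : (Matrix.diagonal Mv)⁻¹ = Matrix.diagonal (fun i => (Mv i)⁻¹) :=
    Matrix.inv_eq_right_inv (by
      rw [Matrix.diagonal_mul_diagonal]
      have : (fun i => Mv i * (Mv i)⁻¹) = fun _ : Fin n => (1:ℝ) :=
        funext fun i => mul_inv_cancel₀ (hM i).ne'
      rw [this]; exact Matrix.diagonal_one)
  rw [hMinv] at hv
  have htop : ∀ i, v (Sum.inr i) = lam * v (Sum.inl i) := by
    intro i
    have h := congrFun hv (Sum.inl i)
    push_cast at h
    simp [Matrix.mulVec, dotProduct, Fintype.sum_sum_type, Matrix.one_apply, ite_mul,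
      apply_ite (Complex.ofReal), Finset.sum_ite_eq] at h
    exact h
  have hbot : ∀ i, (Mv i : ℂ) * lam^2 * v (Sum.inl i) + (Dv i : ℂ) * lam * v (Sum.inl i)
      + ∑ j, (L i j : ℂ) * v (Sum.inl j) = 0 := by
    intro i
    have h := congrFun hv (Sum.inr i)
    simp only [Matrix.mulVec, dotProduct, Fintype.sum_sum_type, Matrix.map_apply,
      Matrix.fromBlocks_apply₂₁, Matrix.fromBlocks_apply₂₂, Matrix.diagonal_mul,
      Matrix.neg_apply, Matrix.diagonal_apply, Pi.smul_apply, smul_eq_mul] at h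
    push_cast at h
    simp only [apply_ite (Complex.ofReal), Complex.ofReal_zero, mul_ite, mul_zero, ite_mul,
      zero_mul, neg_mul, neg_zero, neg_neg,
      Finset.sum_ite_eq, Finset.mem_univ, if_true, Finset.sum_neg_distrib] at h
    rw [htop i] at h
    simp only [neg_mul, Finset.sum_neg_distrib, mul_assoc, ← Finset.mul_sum] at h
    have hMi : ((Mv i : ℝ) : ℂ) ≠ 0 := by exact_mod_cast (hM i).ne'
    field_simp at h
    have h2 : (Mv i : ℂ) * ((Mv i : ℂ) * lam^2 * v (Sum.inl i) + (Dv i : ℂ) * lam * v (Sum.inl i)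
        + ∑ j, (L i j : ℂ) * v (Sum.inl j)) = 0 := by linear_combination (-(Mv i : ℂ)) * h
    exact (mul_eq_zero.mp h2).resolve_left hMi
  -- the first-block part of the eigenvector is nonzero
  obtain ⟨j0, hj0⟩ : ∃ j, v (Sum.inl j) ≠ 0 := by
    by_contra hcon
    push_neg at hcon
    apply hv0
    funext k
    cases k with
    | inl i => exact hcon i
    | inr i => rw [htop i, hcon i, mul_zero]; rfl
  -- choose an index of maximal modulus
  obtain ⟨i₀, -, hmax⟩ := Finset.exists_max_image Finset.univ
    (fun i => norm (v (Sum.inl i))) ⟨j0, Finset.mem_univ _⟩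
  have hmax' : ∀ j, norm (v (Sum.inl j)) ≤ norm (v (Sum.inl i₀)) :=
    fun j => hmax j (Finset.mem_univ j)
  set r : ℝ := norm (v (Sum.inl i₀)) with hr
  have hrpos : 0 < r := lt_of_lt_of_le (by simpa using hj0 : 0 < norm (v (Sum.inl j0))) (hmax' j0)
  set c : ℝ := L i₀ i₀ with hc
  set w : ℂ := (Mv i₀ : ℂ) * lam^2 + (Dv i₀ : ℂ) * lam with hw
  -- row-sum facts
  have hLrow : ∑ j ∈ Finset.univ.erase i₀, L i₀ j = -c := by
    have h := hrow i₀
    rw [← Finset.add_sum_erase _ _ (Finset.mem_univ i₀)] at h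
    linarith
  have hc0 : 0 ≤ c := by
    have hs : ∑ j ∈ Finset.univ.erase i₀, L i₀ j ≤ 0 :=
      Finset.sum_nonpos fun j hj => hoff i₀ j (Ne.symm (Finset.ne_of_mem_erase hj))
    linarith [hLrow.symm ▸ hs]
  -- split the equation at i₀
  have hsplit : ∑ j, (L i₀ j : ℂ) * v (Sum.inl j)
      = (c : ℂ) * v (Sum.inl i₀) + ∑ j ∈ Finset.univ.erase i₀, (L i₀ j : ℂ) * v (Sum.inl j) :=
    (Finset.add_sum_erase _ _ (Finset.mem_univ i₀)).symm
  have heq : (w + (c : ℂ)) * v (Sum.inl i₀)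
      = -∑ j ∈ Finset.univ.erase i₀, (L i₀ j : ℂ) * v (Sum.inl j) := by
    have h := hbot i₀
    rw [hsplit] at h
    rw [hw]
    linear_combination h
  -- modulus estimate
  have hsum_bound : norm (∑ j ∈ Finset.univ.erase i₀, (L i₀ j : ℂ) * v (Sum.inl j))
      ≤ c * r := by
    calc norm (∑ j ∈ Finset.univ.erase i₀, (L i₀ j : ℂ) * v (Sum.inl j))
        ≤ ∑ j ∈ Finset.univ.erase i₀, norm ((L i₀ j : ℂ) * v (Sum.inl j)) :=
          norm_sum_le _ _
      _ ≤ ∑ j ∈ Finset.univ.erase i₀, (-(L i₀ j)) * r := by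
          apply Finset.sum_le_sum
          intro j hj
          have hL : L i₀ j ≤ 0 := hoff i₀ j (Ne.symm (Finset.ne_of_mem_erase hj))
          rw [norm_mul, Complex.norm_real, Real.norm_eq_abs, abs_of_nonpos hL]
          exact mul_le_mul_of_nonneg_left (hmax' j) (neg_nonneg.mpr hL)
      _ = c * r := by rw [← Finset.sum_mul, Finset.sum_neg_distrib, hLrow, neg_neg]
  have habs : norm (w + (c : ℂ)) ≤ c := by
    have h1 : norm (w + (c : ℂ)) * r ≤ c * r := by
      calc norm (w + (c : ℂ)) * r
          = norm ((w + (c : ℂ)) * v (Sum.inl i₀)) := (norm_mul _ _).symm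
        _ = norm (∑ j ∈ Finset.univ.erase i₀, (L i₀ j : ℂ) * v (Sum.inl j)) := by
            rw [heq, norm_neg]
        _ ≤ c * r := hsum_bound
    exact le_of_mul_le_mul_right h1 hrpos
  -- the quadratic inequality
  have hq : Complex.normSq w ≤ -(2 * c * w.re) := by
    have h1 : norm (w + (c:ℂ))^2 ≤ c^2 := pow_le_pow_left₀ (by positivity) habs 2
    rw [Complex.sq_norm] at h1
    have h2 : Complex.normSq (w + (c:ℂ)) = Complex.normSq w + 2*c*w.re + c^2 := by
      simp [Complex.normSq_apply]; ring
    nlinarith [h1, h2]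
  have hwre : w.re ≤ 0 := by
    by_contra hpos
    push_neg at hpos
    have h0 : Complex.normSq w ≤ 0 := le_trans hq (by nlinarith)
    have : w = 0 := Complex.normSq_eq_zero.mp (le_antisymm h0 (Complex.normSq_nonneg w))
    rw [this] at hpos
    simp at hpos
  have hcD : c * (2 * Mv i₀) ≤ Dv i₀ ^ 2 := by
    have := hC i₀
    rw [le_div_iff₀ (by linarith [hM i₀])] at this
    exact this
  have key2 : Complex.normSq w * Mv i₀ ≤ Dv i₀ ^ 2 * (-w.re) := by
    have h3 : Complex.normSq w * Mv i₀ ≤ (-(2 * c * w.re)) * Mv i₀ :=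
      mul_le_mul_of_nonneg_right hq (hM i₀).le
    have h4 : (-(2 * c * w.re)) * Mv i₀ = (c * (2 * Mv i₀)) * (-w.re) := by ring
    have h5 : (c * (2 * Mv i₀)) * (-w.re) ≤ Dv i₀ ^ 2 * (-w.re) :=
      mul_le_mul_of_nonneg_right hcD (neg_nonneg.mpr hwre)
    rw [h4] at h3
    linarith
  -- conclude
  by_contra hcon
  push_neg at hcon
  set a : ℝ := lam.re with ha
  set b : ℝ := lam.im with hb
  have hwre' : w.re = Mv i₀ * (a^2 - b^2) + Dv i₀ * a := by
    rw [hw]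
    simp only [pow_two, Complex.add_re, Complex.mul_re, Complex.mul_im,
      Complex.ofReal_re, Complex.ofReal_im]
    ring
  have hwim : w.im = Mv i₀ * (2*a*b) + Dv i₀ * b := by
    rw [hw]
    simp only [pow_two, Complex.add_im, Complex.mul_re, Complex.mul_im,
      Complex.ofReal_re, Complex.ofReal_im]
    ring
  have hab : 0 < a^2 + b^2 := by
    have := Complex.normSq_pos.mpr hne
    simpa [Complex.normSq_apply, sq] using this
  have key3 : (a^2+b^2) * ((Mv i₀*a+Dv i₀)^2 + (Mv i₀)^2*b^2) * Mv i₀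
      ≤ Dv i₀^2 * (Mv i₀*b^2 - Mv i₀*a^2 - Dv i₀*a) := by
    have hns : Complex.normSq w = (a^2+b^2) * ((Mv i₀*a+Dv i₀)^2 + (Mv i₀)^2*b^2) := by
      rw [Complex.normSq_apply, hwre', hwim]; ring
    have hre : -w.re = Mv i₀*b^2 - Mv i₀*a^2 - Dv i₀*a := by rw [hwre']; ring
    rw [← hns, ← hre]
    exact key2
  exact swing_aux_false a b (Mv i₀) (Dv i₀) (hM i₀) (hD i₀) hcon hab key3
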